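/- Let Γ be a finite graph that is not a cone. Then the natural homomorphism from the isometry group of (A_Γ, d_r) (the right-angled Artin group with the syllable metric) to the automorphism group of the extension graph Γ^e is injective. Conversely, if Γ is a cone, this homomorphism has nontrivial (indeed infinite) kernel. -/

import Mathlib

open SimpleGraph

/-- Relations of the right-angled Artin group `A_Γ`: commutators of adjacent generators. -/
def raagRels (A : Type*) (Γ : SimpleGraph A) : Set (FreeGroup A) :=
  {x | ∃ a b : A, Γ.Adj a b ∧
    x = FreeGroup.of a * FreeGroup.of b * (FreeGroup.of a)⁻¹ * (FreeGroup.of b)⁻¹}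

/-- The right-angled Artin group `A_Γ`. -/
abbrev RAAG (A : Type*) (Γ : SimpleGraph A) := PresentedGroup (raagRels A Γ)

/-- The standard generator of `A_Γ` corresponding to the vertex `a` of `Γ`. -/
def raagGen {A : Type*} (Γ : SimpleGraph A) (a : A) : RAAG A Γ :=
  PresentedGroup.of a

open Monoid Monoid.PushoutI Function

namespace CenterAux

variable {G : Bool → Type*} [∀ i, Group (G i)] {H : Type*} [Group H]
  {φ : ∀ i, H →* G i}

/-- product of a list of letters in the pushout -/
def lp (φ : ∀ i, H →* G i) (L : List (Σ i, G i)) : PushoutI φ :=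
  (L.map fun p => of (φ := φ) p.1 p.2).prod

@[simp] lemma lp_nil : lp φ [] = 1 := rfl

@[simp] lemma lp_cons (p : (Σ i, G i)) (L : List (Σ i, G i)) :
    lp φ (p :: L) = of p.1 p.2 * lp φ L := by
  simp [lp]

@[simp] lemma lp_append (L₁ L₂ : List (Σ i, G i)) :
    lp φ (L₁ ++ L₂) = lp φ L₁ * lp φ L₂ := by
  simp [lp]

/-- reversed list of inverses -/
def ri (L : List (Σ i, G i)) : List (Σ i, G i) :=
  (L.map fun p => ⟨p.1, p.2⁻¹⟩).reverse

@[simp] lemma ri_nil : ri ([] : List (Σ i, G i)) = [] := rfl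

@[simp] lemma ri_cons (p : (Σ i, G i)) (L : List (Σ i, G i)) :
    ri (p :: L) = ri L ++ [⟨p.1, p.2⁻¹⟩] := by
  simp [ri]

@[simp] lemma lp_ri (L : List (Σ i, G i)) : lp φ (ri L) = (lp φ L)⁻¹ := by
  induction L with
  | nil => simp
  | cons p L ih => simp [ih, mul_assoc]

lemma mem_ri {L : List (Σ i, G i)} {p : Σ i, G i} (hp : p ∈ ri L) :
    ∃ q ∈ L, p = ⟨q.1, q.2⁻¹⟩ := by
  simp only [ri, List.mem_reverse, List.mem_map] at hp
  obtain ⟨q, hq, rfl⟩ := hp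
  exact ⟨q, hq, rfl⟩

lemma lp_not_mem_base (hφ : ∀ i, Injective (φ i)) {L : List (Σ i, G i)}
    (hne : L ≠ []) (hch : L.Chain' fun l l' => l.1 ≠ l'.1)
    (hr : ∀ p ∈ L, p.2 ∉ (φ p.1).range) :
    lp φ L ∉ (base φ).range := by
  intro h
  have hone : ∀ l ∈ L, Sigma.snd l ≠ 1 := fun l hl h1 => hr l hl (h1 ▸ one_mem _)
  let w : CoprodI.Word G := ⟨L, hone, hch⟩
  have hred : Reduced φ w := fun g hg => hr g hg
  have hprod : ofCoprodI (φ := φ) w.prod = lp φ L := by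
    simp only [CoprodI.Word.prod, map_list_prod, List.map_map, lp]
    rfl
  have := hred.eq_empty_of_mem_range hφ (by rwa [hprod])
  apply hne
  simpa [w, CoprodI.Word.empty] using congrArg CoprodI.Word.toList this

end CenterAux

namespace CenterAux

variable {G : Bool → Type*} [∀ i, Group (G i)] {H : Type*} [Group H]
  {φ : ∀ i, H →* G i}

lemma not_in_range {d : NormalWord.Transversal φ} {i : Bool} {g : G i}
    (hset : g ∈ d.set i) (hne : g ≠ 1) : g ∉ (φ i).range := by
  intro hrange
  have h1 : (1 : G i) ∈ ((φ i).range : Set (G i)) := one_mem _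
  have h2 : (1 : G i) ∈ d.set i := d.one_mem i
  have := (d.compl i).1 (a₁ := (⟨g, hrange⟩, ⟨1, h2⟩)) (a₂ := (⟨1, h1⟩, ⟨g, hset⟩))
    (by simp)
  exact hne (congrArg (fun p => (p.1 : G i)) this)

theorem aux_noncentral (hφ : ∀ i, Injective (φ i))
    (hbig : ∀ (i : Bool) (k : G i), ∃ c, c ∉ (φ i).range ∧ c * k ∉ (φ i).range)
    (h : H) (L : List (Σ i, G i)) (hLne : L ≠ [])
    (hr : ∀ p ∈ L, p.2 ∉ (φ p.1).range)
    (hch : L.Chain' fun l l' => l.1 ≠ l'.1)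
    (key : ∀ (j : Bool) (c : G j),
      lp φ L * of j c = of j ((φ j h)⁻¹ * c * φ j h) * lp φ L) : False := by
  classical
  set X : PushoutI φ := lp φ L with hX
  obtain ⟨x₁, T, rfl⟩ : ∃ x T, L = x :: T := by
    cases L with
    | nil => exact absurd rfl hLne
    | cons a t => exact ⟨a, t, rfl⟩
  set lst := (x₁ :: T).getLast (by simp) with hlst
  have hlast? : (x₁ :: T).getLast? = some lst := List.getLast?_eq_getLast _
  have hlstr : lst.2 ∉ (φ lst.1).range := hr lst (List.getLast_mem _)
  by_cases hA : lst.1 = x₁.1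
  case pos =>
    set j : Bool := !x₁.1 with hj
    have hjne : j ≠ x₁.1 := by simp [hj]
    obtain ⟨c, hc, -⟩ := hbig j 1
    set c' : G j := (φ j h)⁻¹ * c * φ j h with hc'
    have hc'r : c' ∉ (φ j).range := by
      intro hmem
      apply hc
      have hφh : φ j h ∈ (φ j).range := ⟨h, rfl⟩
      have h2 : (φ j h) * c' * (φ j h)⁻¹ ∈ (φ j).range :=
        mul_mem (mul_mem hφh hmem) (inv_mem hφh)
      rwa [hc', show φ j h * ((φ j h)⁻¹ * c * φ j h) * (φ j h)⁻¹ = c by group] at h2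
    set M : List (Σ i, G i) := (x₁ :: T) ++ ⟨j, c⟩ :: (ri (x₁ :: T) ++ [⟨j, c'⁻¹⟩]) with hM
    have main : lp φ M = X * of j c * X⁻¹ * (of j c')⁻¹ := by
      simp only [hM, lp_append, lp_cons, lp_ri, lp_nil, mul_one, map_mul, map_inv, ← hX]
      group
    have hMprod : lp φ M = 1 := by
      rw [main, hc', key]
      group
    have hMne : M ≠ [] := by simp [hM]
    have hMr : ∀ p ∈ M, p.2 ∉ (φ p.1).range := by
      intro p hp
      rw [hM] at hp
      rcases List.mem_append.1 hp with hp | hp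
      · exact hr p hp
      rcases List.mem_cons.1 hp with rfl | hp
      · exact hc
      rcases List.mem_append.1 hp with hp | hp
      · obtain ⟨q, hq, rfl⟩ := mem_ri hp
        intro hmem
        exact hr q hq (by simpa using inv_mem hmem)
      · rw [List.mem_singleton] at hp
        subst hp
        intro hmem
        exact hc'r (by simpa using inv_mem hmem)
    have hMch : M.Chain' fun l l' => l.1 ≠ l'.1 := by
      rw [hM, List.Chain', List.isChain_append]
      refine ⟨hch, ?_, ?_⟩
      · rw [List.isChain_cons]
        constructor
        · intro y hy
          rw [List.head?_append] at hy
          have hri : (ri (x₁ :: T)).head? = some ⟨lst.1, lst.2⁻¹⟩ := by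
            simp only [ri, List.head?_reverse, List.getLast?_map, hlast?, Option.map_some]
          rw [hri] at hy
          have hy' : some (⟨lst.1, lst.2⁻¹⟩ : Σ i, G i) = some y := hy
          obtain rfl := Option.some_injective _ hy'
          simpa [hA] using hjne
        · rw [List.isChain_append]
          refine ⟨?_, List.isChain_singleton _, ?_⟩
          · rw [ri, List.isChain_reverse]
            exact (List.isChain_map _).2 (hch.imp fun a b hab => by
              simpa using fun e => hab e.symm)
          · intro y hy q hq
            simp only [List.head?_cons, Option.mem_def, Option.some.injEq] at hq
            subst hq
            have hgl : (ri (x₁ :: T)).getLast? = some ⟨x₁.1, x₁.2⁻¹⟩ := by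
              simp [ri, List.getLast?_reverse]
            rw [hgl] at hy
            simp only [Option.mem_def, Option.some.injEq] at hy
            subst hy
            exact fun e => hjne e.symm
      · intro p hp q hq
        rw [hlast?] at hp
        simp only [Option.mem_def, Option.some.injEq] at hp
        subst hp
        simp only [List.head?_cons, Option.mem_def, Option.some.injEq] at hq
        subst hq
        simpa [hA] using fun e => hjne e.symm
    exact absurd (hMprod ▸ (one_mem ((base φ).range))) (lp_not_mem_base hφ hMne hMch hMr)
  case neg =>
    obtain ⟨t₂, T', rfl⟩ : ∃ t T', T = t :: T' := by
      cases hT' : T with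
      | nil =>
        exfalso; apply hA
        rw [hlst, hT']
        rfl
      | cons a t => exact ⟨a, t, rfl⟩
    have hTlast : (t₂ :: T').getLast? = some lst := by
      rw [← List.getLast?_cons_cons (a := x₁)]
      exact hlast?
    have ht₂ : x₁.1 ≠ t₂.1 := (List.isChain_cons_cons.1 hch).1
    obtain ⟨c, hc, hck⟩ := hbig x₁.1 (φ x₁.1 h * x₁.2)
    set c' : G x₁.1 := (φ x₁.1 h)⁻¹ * c * φ x₁.1 h with hc'
    have hend : x₁.2⁻¹ * c'⁻¹ ∉ (φ x₁.1).range := by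
      intro hmem
      apply hck
      have h1 : c' * x₁.2 ∈ (φ x₁.1).range := by
        have := inv_mem hmem
        simpa using this
      have h2 : φ x₁.1 h * (c' * x₁.2) ∈ (φ x₁.1).range := mul_mem ⟨h, rfl⟩ h1
      rwa [hc', show φ x₁.1 h * ((φ x₁.1 h)⁻¹ * c * φ x₁.1 h * x₁.2)
        = c * (φ x₁.1 h * x₁.2) by group] at h2
    set M : List (Σ i, G i) :=
      (x₁ :: t₂ :: T') ++ ⟨x₁.1, c⟩ :: (ri (t₂ :: T') ++ [⟨x₁.1, x₁.2⁻¹ * c'⁻¹⟩]) with hM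
    have hXcons : X = of x₁.1 x₁.2 * lp φ (t₂ :: T') := by rw [hX, lp_cons]
    have main : lp φ M = X * of x₁.1 c * X⁻¹ * (of x₁.1 c')⁻¹ := by
      simp only [hM, lp_append, lp_cons, lp_ri, lp_nil, mul_one, map_mul, map_inv, hXcons]
      group
    have hMprod : lp φ M = 1 := by
      rw [main, hc', key]
      group
    have hMne : M ≠ [] := by simp [hM]
    have hMr : ∀ p ∈ M, p.2 ∉ (φ p.1).range := by
      intro p hp
      rw [hM] at hp
      rcases List.mem_append.1 hp with hp | hp
      · exact hr p hp
      rcases List.mem_cons.1 hp with rfl | hp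
      · exact hc
      rcases List.mem_append.1 hp with hp | hp
      · obtain ⟨q, hq, rfl⟩ := mem_ri hp
        have hq' : q ∈ x₁ :: t₂ :: T' := List.mem_cons_of_mem _ hq
        intro hmem
        exact hr q hq' (by simpa using inv_mem hmem)
      · rw [List.mem_singleton] at hp
        subst hp
        exact hend
    have hMch : M.Chain' fun l l' => l.1 ≠ l'.1 := by
      rw [hM, List.Chain', List.isChain_append]
      refine ⟨hch, ?_, ?_⟩
      · rw [List.isChain_cons]
        constructor
        · intro y hy
          rw [List.head?_append] at hy
          have hri : (ri (t₂ :: T')).head? = some ⟨lst.1, lst.2⁻¹⟩ := by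
            simp only [ri, List.head?_reverse, List.getLast?_map, hTlast, Option.map_some]
          rw [hri] at hy
          have hy' : some (⟨lst.1, lst.2⁻¹⟩ : Σ i, G i) = some y := hy
          obtain rfl := Option.some_injective _ hy'
          simpa using fun e => hA e.symm
        · rw [List.isChain_append]
          refine ⟨?_, List.isChain_singleton _, ?_⟩
          · rw [ri, List.isChain_reverse]
            exact (List.isChain_map _).2 ((hch.tail).imp fun a b hab => by
              simpa using fun e => hab e.symm)
          · intro y hy q hq
            simp only [List.head?_cons, Option.mem_def, Option.some.injEq] at hq
            subst hq
            have hgl : (ri (t₂ :: T')).getLast? = some ⟨t₂.1, t₂.2⁻¹⟩ := by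
              simp [ri, List.getLast?_reverse]
            rw [hgl] at hy
            simp only [Option.mem_def, Option.some.injEq] at hy
            subst hy
            simpa using fun e => ht₂ e.symm
      · intro p hp q hq
        rw [hlast?] at hp
        simp only [Option.mem_def, Option.some.injEq] at hp
        subst hp
        simp only [List.head?_cons, Option.mem_def, Option.some.injEq] at hq
        subst hq
        exact hA
    exact absurd (hMprod ▸ (one_mem ((base φ).range))) (lp_not_mem_base hφ hMne hMch hMr)


theorem center_mem_base (hφ : ∀ i, Injective (φ i))
    (hbig : ∀ (i : Bool) (k : G i), ∃ c, c ∉ (φ i).range ∧ c * k ∉ (φ i).range)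
    {z : PushoutI φ} (hz : ∀ w, z * w = w * z) : z ∈ (base φ).range := by
  classical
  obtain ⟨d⟩ := NormalWord.transversal_nonempty φ hφ
  set W : NormalWord d := z • NormalWord.empty with hW
  have hzW : z = W.prod := by
    rw [hW, NormalWord.prod_smul, NormalWord.prod_empty, mul_one]
  set L : List (Σ i, G i) := W.toList with hLdef
  set h : H := W.head with hh
  have hzprod : z = base φ h * lp φ L := by
    rw [hzW]
    simp only [NormalWord.prod, CoprodI.Word.prod, map_list_prod, List.map_map]
    rfl
  by_cases hLne : L = []
  · rw [hzprod, hLne, lp_nil, mul_one]; exact ⟨h, rfl⟩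
  have hr : ∀ p ∈ L, p.2 ∉ (φ p.1).range := by
    intro p hp
    exact not_in_range (W.normalized p.1 p.2 hp) (W.ne_one p hp)
  have hch : L.Chain' fun l l' => l.1 ≠ l'.1 := W.chain_ne
  set X : PushoutI φ := lp φ L with hX
  have key : ∀ (j : Bool) (c : G j),
      X * of j c = of j ((φ j h)⁻¹ * c * φ j h) * X := by
    intro j c
    have h1 : of (φ := φ) j c * base φ h = base φ h * of j ((φ j h)⁻¹ * c * φ j h) := by
      rw [← of_apply_eq_base φ j h, ← map_mul, ← map_mul]
      congr 1
      group
    have h2 := hz (of j c)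
    rw [hzprod] at h2
    have h3 : base φ h * (X * of j c) =
        base φ h * (of j ((φ j h)⁻¹ * c * φ j h) * X) := by
      calc base φ h * (X * of j c) = base φ h * X * of j c := by rw [mul_assoc]
      _ = of j c * (base φ h * X) := h2
      _ = (of j c * base φ h) * X := by rw [mul_assoc]
      _ = base φ h * (of j ((φ j h)⁻¹ * c * φ j h) * X) := by rw [h1, mul_assoc]
    exact mul_left_cancel h3
  exact (aux_noncentral hφ hbig h L hLne hr hch key).elim

end CenterAux

namespace RaagAux
open scoped Classical

variable {A : Type*} {Γ : SimpleGraph A}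

/-- Universal property tailored to RAAGs. -/
def raagLift {G : Type*} [Group G] (f : A → G)
    (hf : ∀ a b : A, Γ.Adj a b → Commute (f a) (f b)) : RAAG A Γ →* G :=
  PresentedGroup.toGroup (f := f) (by
    rintro r ⟨a, b, hab, rfl⟩
    have h := hf a b hab
    simp only [map_mul, map_inv, FreeGroup.lift_apply_of]
    rw [h.eq]
    group)

@[simp] lemma raagLift_gen {G : Type*} [Group G] (f : A → G)
    (hf : ∀ a b : A, Γ.Adj a b → Commute (f a) (f b)) (a : A) :
    raagLift f hf (raagGen Γ a) = f a :=
  PresentedGroup.toGroup.of _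

lemma raag_rel {a b : A} (h : Γ.Adj a b) :
    raagGen Γ a * raagGen Γ b = raagGen Γ b * raagGen Γ a := by
  have hmem : (FreeGroup.of a * FreeGroup.of b * (FreeGroup.of a)⁻¹ * (FreeGroup.of b)⁻¹) ∈
      Subgroup.normalClosure (raagRels A Γ) :=
    Subgroup.subset_normalClosure ⟨a, b, h, rfl⟩
  have h1 : (PresentedGroup.mk (raagRels A Γ))
      (FreeGroup.of a * FreeGroup.of b * (FreeGroup.of a)⁻¹ * (FreeGroup.of b)⁻¹) = 1 :=
    (QuotientGroup.eq_one_iff _).2 hmem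
  have h2 : raagGen Γ a * raagGen Γ b * (raagGen Γ a)⁻¹ * (raagGen Γ b)⁻¹ = 1 := by
    have h1' := h1; simp only [map_mul, map_inv] at h1'; exact h1'
  calc raagGen Γ a * raagGen Γ b
      = (raagGen Γ a * raagGen Γ b * (raagGen Γ a)⁻¹ * (raagGen Γ b)⁻¹) *
        (raagGen Γ b * raagGen Γ a) := by group
  _ = raagGen Γ b * raagGen Γ a := by rw [h2]; group

/-- vertex-exponent homomorphism -/
noncomputable def eps (a : A) : RAAG A Γ →* Multiplicative ℤ :=
  raagLift (fun v => Multiplicative.ofAdd (if v = a then 1 else 0))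
    (fun _ _ _ => Commute.all _ _)

@[simp] lemma eps_gen (a v : A) :
    eps (Γ := Γ) a (raagGen Γ v) = Multiplicative.ofAdd (if v = a then 1 else 0) :=
  raagLift_gen _ _ _

lemma eps_gen_zpow (a : A) (n : ℤ) :
    eps (Γ := Γ) a (raagGen Γ a ^ n) = Multiplicative.ofAdd n := by
  rw [map_zpow, eps_gen, if_pos rfl, ← ofAdd_zsmul]
  norm_num

/-- generator powers are all distinct -/
lemma gen_zpow_injective (a : A) : Function.Injective fun n : ℤ => raagGen Γ a ^ n := by
  intro n m h
  have := congrArg (eps (Γ := Γ) a) h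
  rw [eps_gen_zpow, eps_gen_zpow] at this
  exact Multiplicative.ofAdd.injective this

/-- abelianization-style homomorphism recording all exponents -/
noncomputable def abHom : RAAG A Γ →* Multiplicative (A →₀ ℤ) :=
  raagLift (fun v => Multiplicative.ofAdd (Finsupp.single v 1))
    (fun _ _ _ => Commute.all _ _)

/-- conjugates of distinct standard generators are distinct -/
lemma gen_conj_eq {x y : RAAG A Γ} {a b : A}
    (h : y * raagGen Γ b * y⁻¹ = x * raagGen Γ a * x⁻¹) : b = a := by
  have := congrArg (abHom (Γ := Γ)) h
  simp only [map_mul, map_inv] at this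
  have hb : abHom (Γ := Γ) (raagGen Γ b) = abHom (Γ := Γ) (raagGen Γ a) := by
    have h1 := this
    -- target is commutative, so conjugation is trivial
    have : ∀ (u g : Multiplicative (A →₀ ℤ)), u * g * u⁻¹ = g := fun u g => by
      rw [mul_comm u g, mul_assoc]
      simp
    rwa [this, this] at h1
  have hsingle : (Finsupp.single b 1 : A →₀ ℤ) = Finsupp.single a 1 := by
    have h2 : Multiplicative.ofAdd (Finsupp.single b (1 : ℤ))
        = Multiplicative.ofAdd (Finsupp.single a (1 : ℤ)) := by
      simpa [abHom, raagLift_gen] using hb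
    exact Multiplicative.ofAdd.injective h2
  by_contra hne
  have h3 := DFunLike.congr_fun hsingle b
  simp [Finsupp.single_apply, Ne.symm hne] at h3

/-- if z commutes with all generators, it is central -/
lemma central_of_comm {z : RAAG A Γ}
    (hz : ∀ a : A, z * raagGen Γ a = raagGen Γ a * z) (w : RAAG A Γ) :
    z * w = w * z := by
  have hw : w ∈ Subgroup.closure (Set.range (PresentedGroup.of : A → RAAG A Γ)) := by
    rw [PresentedGroup.closure_range_of]; trivial
  induction hw using Subgroup.closure_induction with
  | mem x hx => obtain ⟨a, rfl⟩ := hx; exact hz a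
  | one => simp
  | mul x y _ _ hx hy =>
    rw [← mul_assoc, hx, mul_assoc, hy, mul_assoc]
  | inv x _ hx =>
    calc z * x⁻¹ = x⁻¹ * (x * z * x⁻¹) := by group
    _ = x⁻¹ * z := by rw [← hx]; group

/-- the subgroup generated by the generators in `S` -/
def gs (Γ : SimpleGraph A) (S : Set A) : Subgroup (RAAG A Γ) :=
  Subgroup.closure (raagGen Γ '' S)

lemma gs_mono {S T : Set A} (h : S ⊆ T) : gs Γ S ≤ gs Γ T :=
  Subgroup.closure_mono (Set.image_mono h)

/-- retraction onto the subgroup generated by `S` -/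
noncomputable def retr (Γ : SimpleGraph A) (S : Set A) : RAAG A Γ →* RAAG A Γ :=
  raagLift (fun v => if v ∈ S then raagGen Γ v else 1) (by
    intro a b hab
    by_cases ha : a ∈ S <;> by_cases hb : b ∈ S <;>
      simp [ha, hb, Commute, SemiconjBy, raag_rel hab])

lemma retr_fix {S : Set A} {z : RAAG A Γ} (hz : z ∈ gs Γ S) : retr Γ S z = z := by
  induction hz using Subgroup.closure_induction with
  | mem x hx =>
    obtain ⟨v, hv, rfl⟩ := hx
    simp [retr, hv]
  | one => simp
  | mul x y _ _ hx hy => rw [map_mul, hx, hy]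
  | inv x _ hx => rw [map_inv, hx]

lemma retr_mem_inter {S T : Set A} {z : RAAG A Γ} (hz : z ∈ gs Γ S) :
    retr Γ T z ∈ gs Γ (S ∩ T) := by
  induction hz using Subgroup.closure_induction with
  | mem x hx =>
    obtain ⟨v, hv, rfl⟩ := hx
    by_cases hT : v ∈ T
    · simp only [retr, raagLift_gen, if_pos hT]
      exact Subgroup.subset_closure ⟨v, ⟨hv, hT⟩, rfl⟩
    · simp only [retr, raagLift_gen, if_neg hT]
      exact one_mem _
  | one => rw [map_one]; exact one_mem _
  | mul x y _ _ hx hy => rw [map_mul]; exact mul_mem hx hy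
  | inv x _ hx => rw [map_inv]; exact inv_mem hx

lemma mem_gs_inter {S T : Set A} {z : RAAG A Γ} (hS : z ∈ gs Γ S) (hT : z ∈ gs Γ T) :
    z ∈ gs Γ (S ∩ T) := by
  have := retr_mem_inter (T := T) hS
  rwa [retr_fix hT] at this

lemma gs_univ (z : RAAG A Γ) : z ∈ gs Γ Set.univ := by
  rw [gs, Set.image_univ,
    show (raagGen Γ : A → RAAG A Γ) = PresentedGroup.of from rfl,
    PresentedGroup.closure_range_of]
  trivial

lemma gs_empty {z : RAAG A Γ} (hz : z ∈ gs Γ (∅ : Set A)) : z = 1 := by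
  rw [gs, Set.image_empty, Subgroup.closure_empty, Subgroup.mem_bot] at hz
  exact hz



namespace Star

open Monoid Monoid.PushoutI Function

variable {A : Type*} {Γ : SimpleGraph A}

/-- inclusion homomorphism between RAAGs of induced subgraphs -/
noncomputable def inclS {S T : Set A} (h : S ⊆ T) :
    RAAG S (Γ.induce S) →* RAAG T (Γ.induce T) :=
  RaagAux.raagLift (fun v => raagGen (Γ.induce T) ⟨v.1, h v.2⟩)
    (fun u v huv => by
      have : (Γ.induce T).Adj ⟨u.1, h u.2⟩ ⟨v.1, h v.2⟩ := by
        simpa using (by simpa using huv : Γ.Adj u.1 v.1)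
      exact RaagAux.raag_rel this)

@[simp] lemma inclS_gen {S T : Set A} (h : S ⊆ T) (v : S) :
    inclS (Γ := Γ) h (raagGen (Γ.induce S) v) = raagGen (Γ.induce T) ⟨v.1, h v.2⟩ :=
  RaagAux.raagLift_gen _ _ _

/-- inclusion homomorphism into the full RAAG -/
noncomputable def inclF (S : Set A) :
    RAAG S (Γ.induce S) →* RAAG A Γ :=
  RaagAux.raagLift (fun v => raagGen Γ v.1)
    (fun u v huv => RaagAux.raag_rel (by simpa using huv))

@[simp] lemma inclF_gen (S : Set A) (v : S) :
    inclF (Γ := Γ) S (raagGen (Γ.induce S) v) = raagGen Γ v.1 :=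
  RaagAux.raagLift_gen _ _ _

open scoped Classical in
/-- retraction between RAAGs of induced subgraphs -/
noncomputable def retrS {S T : Set A} (_h : S ⊆ T) :
    RAAG T (Γ.induce T) →* RAAG S (Γ.induce S) :=
  RaagAux.raagLift (fun v => if hv : v.1 ∈ S then raagGen (Γ.induce S) ⟨v.1, hv⟩ else 1)
    (fun u v huv => by
      by_cases hu : u.1 ∈ S <;> by_cases hv : v.1 ∈ S <;>
        simp [hu, hv, Commute, SemiconjBy]
      have : (Γ.induce S).Adj ⟨u.1, hu⟩ ⟨v.1, hv⟩ := by
        simpa using (by simpa using huv : Γ.Adj u.1 v.1)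
      exact RaagAux.raag_rel this)

lemma inclS_injective {S T : Set A} (h : S ⊆ T) : Injective (inclS (Γ := Γ) h) := by
  classical
  have hcomp : (retrS (Γ := Γ) h).comp (inclS (Γ := Γ) h) = MonoidHom.id _ := by
    ext v
    show retrS h (inclS h (PresentedGroup.of v)) = PresentedGroup.of v
    rw [show (PresentedGroup.of v : RAAG S (Γ.induce S)) = raagGen (Γ.induce S) v from rfl,
      inclS_gen]
    simp [retrS, v.2]
  intro x y hxy
  have := congrArg (retrS (Γ := Γ) h) hxy
  rwa [show ∀ u, retrS (Γ := Γ) h (inclS (Γ := Γ) h u) = u from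
    fun u => DFunLike.congr_fun hcomp u, show ∀ u, retrS (Γ := Γ) h (inclS (Γ := Γ) h u) = u from
    fun u => DFunLike.congr_fun hcomp u] at this

lemma inclF_mem_gs (S : Set A) (g : RAAG S (Γ.induce S)) :
    inclF (Γ := Γ) S g ∈ RaagAux.gs Γ S := by
  refine PresentedGroup.generated_by _ ((RaagAux.gs Γ S).comap (inclF (Γ := Γ) S)) ?_ g
  intro v
  simp only [Subgroup.mem_comap]
  rw [show (PresentedGroup.of v : RAAG S (Γ.induce S)) = raagGen (Γ.induce S) v from rfl,
    inclF_gen]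
  exact Subgroup.subset_closure ⟨v.1, v.2, rfl⟩

end Star

end RaagAux

namespace RaagAux.Star

open Monoid Monoid.PushoutI Function

variable {A : Type*} {Γ : SimpleGraph A}

def StS (Γ : SimpleGraph A) (a : A) : Set A := {v | v = a ∨ Γ.Adj a v}
def LkS (Γ : SimpleGraph A) (a : A) : Set A := {v | Γ.Adj a v}
def BS (a : A) : Set A := {v | v ≠ a}

lemma lk_subset_st {a : A} : LkS Γ a ⊆ StS Γ a := fun _ hv => Or.inr hv

lemma lk_subset_bs {a : A} : LkS Γ a ⊆ BS a := fun v hv h => by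
  subst h; exact Γ.irrefl hv

lemma mem_bs_of_mem_st {a v : A} (h1 : v ∈ StS Γ a) (h2 : v ≠ a) : v ∈ LkS Γ a := by
  rcases h1 with h1 | h1
  · exact absurd h1 h2
  · exact h1

/-- the two factor groups of the star decomposition -/
def GF (Γ : SimpleGraph A) (a : A) : Bool → Type _ := fun i =>
  match i with
  | true => RAAG (StS Γ a) (Γ.induce (StS Γ a))
  | false => RAAG (BS a) (Γ.induce (BS a))

instance (a : A) (i : Bool) : Group (GF Γ a i) := by
  cases i <;> dsimp [GF] <;> infer_instance

/-- the base inclusion maps of the star decomposition -/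
noncomputable def φF (Γ : SimpleGraph A) (a : A) :
    ∀ i : Bool, RAAG (LkS Γ a) (Γ.induce (LkS Γ a)) →* GF Γ a i := fun i =>
  match i with
  | true => inclS lk_subset_st
  | false => inclS lk_subset_bs

lemma φF_injective (a : A) : ∀ i, Injective (φF Γ a i) := by
  intro i
  cases i
  · exact inclS_injective lk_subset_bs
  · exact inclS_injective lk_subset_st

lemma bridge {a v : A} (hv : Γ.Adj a v) (h1 : v ∈ StS Γ a) (h2 : v ∈ BS a) :
    of (φ := φF Γ a) true (raagGen (Γ.induce (StS Γ a)) ⟨v, h1⟩)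
      = of (φ := φF Γ a) false (raagGen (Γ.induce (BS a)) ⟨v, h2⟩) := by
  have e1 : φF Γ a true (raagGen (Γ.induce (LkS Γ a)) ⟨v, hv⟩)
      = raagGen (Γ.induce (StS Γ a)) ⟨v, h1⟩ :=
    inclS_gen (Γ := Γ) (lk_subset_st (a := a)) ⟨v, hv⟩
  have e2 : φF Γ a false (raagGen (Γ.induce (LkS Γ a)) ⟨v, hv⟩)
      = raagGen (Γ.induce (BS a)) ⟨v, h2⟩ :=
    inclS_gen (Γ := Γ) (lk_subset_bs (Γ := Γ) (a := a)) ⟨v, hv⟩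
  rw [← e1, ← e2, of_apply_eq_base, of_apply_eq_base]

open scoped Classical in
/-- the comparison map from the RAAG to the pushout -/
noncomputable def Ψ (Γ : SimpleGraph A) (a : A) : RAAG A Γ →* PushoutI (φF Γ a) :=
  RaagAux.raagLift (fun v =>
    if hv : v ∈ StS Γ a then of (φ := φF Γ a) true (raagGen (Γ.induce (StS Γ a)) ⟨v, hv⟩)
    else of (φ := φF Γ a) false (raagGen (Γ.induce (BS a))
      ⟨v, fun h => hv (h ▸ Or.inl rfl)⟩))
    (by
      intro u v huv
      have hne : u ≠ v := Γ.ne_of_adj huv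
      by_cases hu : u ∈ StS Γ a <;> by_cases hv : v ∈ StS Γ a <;>
        simp only [dif_pos, dif_neg, hu, hv]
      · -- both in star
        refine Commute.map ?_ (of (φ := φF Γ a) true)
        exact RaagAux.raag_rel (by simpa using huv)
      · -- u in star, v not
        have hua : u ≠ a := fun h => hv (Or.inr (h ▸ huv))
        have hub : u ∈ BS a := hua
        rw [bridge (mem_bs_of_mem_st hu hua) hu hub]
        refine Commute.map ?_ (of (φ := φF Γ a) false)
        exact RaagAux.raag_rel (by simpa using huv)
      · -- v in star, u not
        have hva : v ≠ a := fun h => hu (Or.inr (h ▸ huv.symm))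
        have hvb : v ∈ BS a := hva
        rw [bridge (mem_bs_of_mem_st hv hva) hv hvb]
        refine Commute.map ?_ (of (φ := φF Γ a) false)
        exact RaagAux.raag_rel (by simpa using huv)
      · refine Commute.map ?_ (of (φ := φF Γ a) false)
        exact RaagAux.raag_rel (by simpa using huv))

/-- the comparison map from the pushout to the RAAG -/
noncomputable def Φ (Γ : SimpleGraph A) (a : A) : PushoutI (φF Γ a) →* RAAG A Γ :=
  PushoutI.lift
    (fun i => match i with
      | true => inclF (StS Γ a)
      | false => inclF (BS a))
    (inclF (LkS Γ a))
    (by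
      intro i
      cases i
      · refine PresentedGroup.ext fun v => ?_
        show inclF (BS a) (inclS (lk_subset_bs (Γ := Γ) (a := a))
            (raagGen (Γ.induce (LkS Γ a)) v))
          = inclF (LkS Γ a) (raagGen (Γ.induce (LkS Γ a)) v)
        rw [inclS_gen, inclF_gen, inclF_gen]
      · refine PresentedGroup.ext fun v => ?_
        show inclF (StS Γ a) (inclS (lk_subset_st (Γ := Γ) (a := a))
            (raagGen (Γ.induce (LkS Γ a)) v))
          = inclF (LkS Γ a) (raagGen (Γ.induce (LkS Γ a)) v)
        rw [inclS_gen, inclF_gen, inclF_gen])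

@[simp] lemma Φ_of_true (a : A) (g : RAAG (StS Γ a) (Γ.induce (StS Γ a))) :
    Φ Γ a (of (φ := φF Γ a) true g) = inclF (StS Γ a) g :=
  PushoutI.lift_of _ _ _ _

@[simp] lemma Φ_of_false (a : A) (g : RAAG (BS a) (Γ.induce (BS a))) :
    Φ Γ a (of (φ := φF Γ a) false g) = inclF (BS a) g :=
  PushoutI.lift_of _ _ _ _

@[simp] lemma Φ_base (a : A) (g : RAAG (LkS Γ a) (Γ.induce (LkS Γ a))) :
    Φ Γ a (base (φF Γ a) g) = inclF (LkS Γ a) g :=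
  PushoutI.lift_base _ _ _ _

lemma ΦΨ (a : A) (x : RAAG A Γ) : Φ Γ a (Ψ Γ a x) = x := by
  classical
  have hcomp : (Φ Γ a).comp (Ψ Γ a) = MonoidHom.id _ := by
    ext v
    show Φ Γ a (Ψ Γ a (PresentedGroup.of v)) = PresentedGroup.of v
    rw [show (PresentedGroup.of v : RAAG A Γ) = raagGen Γ v from rfl]
    rw [show Ψ Γ a (raagGen Γ v) = _ from RaagAux.raagLift_gen _ _ _]
    by_cases hv : v ∈ StS Γ a
    · rw [dif_pos hv, Φ_of_true, inclF_gen]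
    · rw [dif_neg hv, Φ_of_false, inclF_gen]
  exact DFunLike.congr_fun hcomp x

lemma ΨΦ (a : A) (x : PushoutI (φF Γ a)) : Ψ Γ a (Φ Γ a x) = x := by
  classical
  have hcomp : (Ψ Γ a).comp (Φ Γ a) = MonoidHom.id _ := by
    refine PushoutI.hom_ext_nonempty ?_
    intro i
    cases i
    · -- false component
      refine PresentedGroup.ext fun v => ?_
      show Ψ Γ a (Φ Γ a (of (φ := φF Γ a) false (raagGen (Γ.induce (BS a)) v)))
        = of (φ := φF Γ a) false (raagGen (Γ.induce (BS a)) v)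
      rw [Φ_of_false, inclF_gen]
      rw [show Ψ Γ a (raagGen Γ v.1) = _ from RaagAux.raagLift_gen _ _ _]
      by_cases hv : v.1 ∈ StS Γ a
      · rw [dif_pos hv]
        have hva : v.1 ≠ a := v.2
        exact bridge (Γ := Γ) (mem_bs_of_mem_st hv hva) hv v.2
      · rw [dif_neg hv]
    · -- true component
      refine PresentedGroup.ext fun v => ?_
      show Ψ Γ a (Φ Γ a (of (φ := φF Γ a) true (raagGen (Γ.induce (StS Γ a)) v)))
        = of (φ := φF Γ a) true (raagGen (Γ.induce (StS Γ a)) v)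
      rw [Φ_of_true, inclF_gen]
      rw [show Ψ Γ a (raagGen Γ v.1) = _ from RaagAux.raagLift_gen _ _ _]
      rw [dif_pos v.2]
  exact DFunLike.congr_fun hcomp x

lemma eps_inclS {S T : Set A} (h : S ⊆ T) (t : T) (ht : t.1 ∉ S)
    (g : RAAG S (Γ.induce S)) :
    RaagAux.eps t (inclS (Γ := Γ) h g) = 1 := by
  have hcomp : (RaagAux.eps t).comp (inclS (Γ := Γ) h) = 1 := by
    ext v
    show RaagAux.eps t (inclS (Γ := Γ) h (PresentedGroup.of v)) = 1
    rw [show (PresentedGroup.of v : RAAG S (Γ.induce S)) = raagGen (Γ.induce S) v from rfl,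
      inclS_gen, RaagAux.eps_gen]
    have hne : (⟨v.1, h v.2⟩ : T) ≠ t := fun he => ht (he ▸ v.2)
    simp [hne]
  exact DFunLike.congr_fun hcomp g

lemma central_mem_star (a b₀ : A) (hb₀ : b₀ ≠ a) (hnadj : ¬ Γ.Adj a b₀)
    {z : RAAG A Γ} (hz : ∀ w, z * w = w * z) : z ∈ RaagAux.gs Γ (StS Γ a) := by
  classical
  have hbig : ∀ (i : Bool) (k : GF Γ a i), ∃ c, c ∉ (φF Γ a i).range ∧
      c * k ∉ (φF Γ a i).range := by
    intro i
    cases i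
    · -- false side: use b₀
      intro k
      set apex : (BS a : Set A) := ⟨b₀, hb₀⟩ with hapex
      set m : ℤ := Multiplicative.toAdd (RaagAux.eps apex k) with hm
      have hkey : ∀ x ∈ (φF Γ a false).range, RaagAux.eps apex x = 1 := by
        rintro x ⟨g, rfl⟩
        exact eps_inclS lk_subset_bs apex hnadj g
      refine ⟨raagGen (Γ.induce (BS a)) apex ^ (|m| + 1), ?_, ?_⟩
      · intro hmem
        have := hkey _ hmem
        rw [RaagAux.eps_gen_zpow] at this
        have h0 : |m| + 1 = 0 := by exact_mod_cast Multiplicative.ofAdd.injective this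
        have := abs_nonneg m
        omega
      · intro hmem
        have := hkey _ hmem
        erw [map_mul] at this
        rw [RaagAux.eps_gen_zpow] at this
        have h0 : |m| + 1 + m = 0 := by
          have h1 : Multiplicative.ofAdd (|m| + 1) * RaagAux.eps apex k
              = Multiplicative.ofAdd (|m| + 1 + m) := by
            have hk : RaagAux.eps apex k = Multiplicative.ofAdd m := by
              rw [hm, ofAdd_toAdd]
            rw [hk, ← ofAdd_add]
          rw [h1] at this
          exact_mod_cast Multiplicative.ofAdd.injective this
        have := neg_abs_le m
        omega
    · -- true side: use a
      intro k
      set apex : (StS Γ a : Set A) := ⟨a, Or.inl rfl⟩ with hapex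
      set m : ℤ := Multiplicative.toAdd (RaagAux.eps apex k) with hm
      have hkey : ∀ x ∈ (φF Γ a true).range, RaagAux.eps apex x = 1 := by
        rintro x ⟨g, rfl⟩
        exact eps_inclS lk_subset_st apex (fun h => Γ.irrefl h) g
      refine ⟨raagGen (Γ.induce (StS Γ a)) apex ^ (|m| + 1), ?_, ?_⟩
      · intro hmem
        have := hkey _ hmem
        rw [RaagAux.eps_gen_zpow] at this
        have h0 : |m| + 1 = 0 := by exact_mod_cast Multiplicative.ofAdd.injective this
        have := abs_nonneg m
        omega
      · intro hmem
        have := hkey _ hmem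
        erw [map_mul] at this
        rw [RaagAux.eps_gen_zpow] at this
        have h0 : |m| + 1 + m = 0 := by
          have h1 : Multiplicative.ofAdd (|m| + 1) * RaagAux.eps apex k
              = Multiplicative.ofAdd (|m| + 1 + m) := by
            have hk : RaagAux.eps apex k = Multiplicative.ofAdd m := by
              rw [hm, ofAdd_toAdd]
            rw [hk, ← ofAdd_add]
          rw [h1] at this
          exact_mod_cast Multiplicative.ofAdd.injective this
        have := neg_abs_le m
        omega
  have hcentral : ∀ w, Ψ Γ a z * w = w * Ψ Γ a z := by
    intro w
    have : w = Ψ Γ a (Φ Γ a w) := (ΨΦ a w).symm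
    rw [this, ← map_mul, ← map_mul, hz]
  obtain ⟨hh, hbase⟩ := CenterAux.center_mem_base (φF_injective a) hbig hcentral
  have hzval : z = inclF (LkS Γ a) hh := by
    rw [← ΦΨ a z, ← hbase]
    rw [Φ_base]
  rw [hzval]
  exact RaagAux.gs_mono lk_subset_st (inclF_mem_gs _ _)

end RaagAux.Star


/-- The Cayley graph of `A_Γ` w.r.t. the standard generators: the 1-skeleton of the
universal cover of the Salvetti complex. Its graph metric is the word metric `d_w`. -/
def wordGraph (A : Type*) (Γ : SimpleGraph A) : SimpleGraph (RAAG A Γ) :=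
  SimpleGraph.fromRel (fun g h => ∃ a : A, h = g * raagGen Γ a)

/-- The Cayley graph of `A_Γ` w.r.t. all powers of standard generators: its graph metric
is the syllable metric `d_r` (the largest metric with `d_r(x,y) = 1` whenever `x ≠ y` lie
on a common standard geodesic). -/
def syllGraph (A : Type*) (Γ : SimpleGraph A) : SimpleGraph (RAAG A Γ) :=
  SimpleGraph.fromRel (fun g h => ∃ (a : A) (n : ℤ), h = g * raagGen Γ a ^ n)

/-- The standard geodesic through `x` in the direction of the generator `a`. -/
def stdGeo {A : Type*} (Γ : SimpleGraph A) (x : RAAG A Γ) (a : A) : Set (RAAG A Γ) :=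
  {y | ∃ n : ℤ, y = x * raagGen Γ a ^ n}

/-- `Γ` is a cone over one of its vertices. -/
def GraphIsCone {A : Type*} (Γ : SimpleGraph A) : Prop :=
  ∃ a : A, ∀ b : A, b ≠ a → Γ.Adj a b

/-- `f` is an isometry of `A_Γ` with the syllable metric `d_r`. -/
def IsSyllIsom {A : Type*} (Γ : SimpleGraph A) (f : RAAG A Γ ≃ RAAG A Γ) : Prop :=
  ∀ x y : RAAG A Γ, (syllGraph A Γ).dist (f x) (f y) = (syllGraph A Γ).dist x y

/-- `f` induces the identity automorphism of the extension graph `Γ^e`: it takes every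
standard geodesic to a parallel standard geodesic, i.e. one with the same associated
vertex of `Γ^e` (the conjugate `x (of a) x⁻¹` of a standard generator). -/
def InducesIdOnExtensionGraph {A : Type*} (Γ : SimpleGraph A)
    (f : RAAG A Γ ≃ RAAG A Γ) : Prop :=
  ∀ (x : RAAG A Γ) (a : A), ∃ (y : RAAG A Γ) (b : A),
    f '' stdGeo Γ x a = stdGeo Γ y b ∧
    y * raagGen Γ b * y⁻¹ = x * raagGen Γ a * x⁻¹

namespace RaagAux

lemma iso_edist_le {V W : Type*} {G : SimpleGraph V} {G' : SimpleGraph W}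
    (e : G ≃g G') (x y : V) : G'.edist (e x) (e y) ≤ G.edist x y := by
  rw [SimpleGraph.edist_eq_sInf, SimpleGraph.edist_eq_sInf]
  apply sInf_le_sInf
  rintro _ ⟨w, rfl⟩
  exact ⟨w.map e.toHom, by simp⟩

lemma iso_dist_eq {V W : Type*} {G : SimpleGraph V} {G' : SimpleGraph W}
    (e : G ≃g G') (x y : V) : G'.dist (e x) (e y) = G.dist x y := by
  have h1 := iso_edist_le e x y
  have h2 := iso_edist_le e.symm (e x) (e y)
  rw [RelIso.symm_apply_apply, RelIso.symm_apply_apply] at h2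
  have h3 : G'.edist (e x) (e y) = G.edist x y := le_antisymm h1 h2
  rw [SimpleGraph.dist, SimpleGraph.dist, h3]

variable {A : Type*} {Γ : SimpleGraph A}

/-- right multiplication by a central element is an isomorphism of the syllable graph -/
noncomputable def mulRightIso (c : RAAG A Γ) (hc : ∀ w, c * w = w * c) :
    syllGraph A Γ ≃g syllGraph A Γ where
  toEquiv := Equiv.mulRight c
  map_rel_iff' := by
    intro x y
    show (syllGraph A Γ).Adj (x * c) (y * c) ↔ (syllGraph A Γ).Adj x y
    have hmove : ∀ u v : RAAG A Γ,
        (∃ (a : A) (n : ℤ), v * c = u * c * raagGen Γ a ^ n) ↔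
        (∃ (a : A) (n : ℤ), v = u * raagGen Γ a ^ n) := by
      intro u v
      constructor
      · rintro ⟨a, n, h⟩
        refine ⟨a, n, ?_⟩
        have : v * c = u * raagGen Γ a ^ n * c := by
          rw [h, mul_assoc, mul_assoc, hc (raagGen Γ a ^ n)]
        exact mul_right_cancel this
      · rintro ⟨a, n, rfl⟩
        exact ⟨a, n, by rw [mul_assoc, mul_assoc, hc (raagGen Γ a ^ n)]⟩
    simp only [syllGraph, SimpleGraph.fromRel_adj, hmove, mul_left_inj, ne_eq]

lemma mulRight_isSyllIsom (c : RAAG A Γ) (hc : ∀ w, c * w = w * c) :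
    IsSyllIsom Γ (Equiv.mulRight c) := by
  intro x y
  exact iso_dist_eq (mulRightIso c hc) x y

lemma mulRight_inducesId (c : RAAG A Γ) (hc : ∀ w, c * w = w * c) :
    InducesIdOnExtensionGraph Γ (Equiv.mulRight c) := by
  intro x a
  refine ⟨x * c, a, ?_, ?_⟩
  · ext w
    simp only [Set.mem_image, stdGeo, Set.mem_setOf_eq, Equiv.coe_mulRight]
    constructor
    · rintro ⟨u, ⟨n, rfl⟩, rfl⟩
      exact ⟨n, by rw [mul_assoc, mul_assoc, hc (raagGen Γ a ^ n)]⟩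
    · rintro ⟨n, rfl⟩
      exact ⟨x * raagGen Γ a ^ n, ⟨n, rfl⟩,
        by rw [mul_assoc, mul_assoc, ← hc (raagGen Γ a ^ n)]⟩
  · have h1 : x * c * raagGen Γ a * (x * c)⁻¹ = x * (c * raagGen Γ a * c⁻¹) * x⁻¹ := by
      group
    rw [h1, hc (raagGen Γ a)]
    group

end RaagAux

/-- if the finite graph `Γ` is not a cone, the natural homomorphism
`Isom(A_Γ, d_r) → Aut(Γ^e)` is injective (its kernel — the isometries of the syllable
metric inducing the identity on the extension graph — is trivial); conversely, if `Γ` is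
a cone, this kernel is infinite. -/
theorem syllable_isometries_to_extension_graph {A : Type*} [Fintype A]
    (Γ : SimpleGraph A) :
    (¬ GraphIsCone Γ → ∀ f : RAAG A Γ ≃ RAAG A Γ, IsSyllIsom Γ f →
      InducesIdOnExtensionGraph Γ f → f = Equiv.refl (RAAG A Γ)) ∧
    (GraphIsCone Γ →
      {f : RAAG A Γ ≃ RAAG A Γ |
        IsSyllIsom Γ f ∧ InducesIdOnExtensionGraph Γ f}.Infinite) := by
  classical
  constructor
  · intro hncone f _ hind
    have hcone : ∀ a : A, ∃ b, b ≠ a ∧ ¬ Γ.Adj a b := by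
      intro a
      by_contra h
      push_neg at h
      exact hncone ⟨a, fun b hb => h b hb⟩
    refine Equiv.ext fun x => ?_
    show f x = x
    have hx : ∀ a : A, f x * raagGen Γ a * (f x)⁻¹ = x * raagGen Γ a * x⁻¹ := by
      intro a
      obtain ⟨y, b, himg, hconj⟩ := hind x a
      have hba : b = a := RaagAux.gen_conj_eq hconj
      subst hba
      have hfx : f x ∈ stdGeo Γ y b := by
        rw [← himg]
        exact ⟨x, ⟨0, by simp⟩, rfl⟩
      obtain ⟨n, hn⟩ := hfx
      rw [hn]
      calc y * raagGen Γ b ^ n * raagGen Γ b * (y * raagGen Γ b ^ n)⁻¹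
          = y * raagGen Γ b * y⁻¹ := by group
      _ = x * raagGen Γ b * x⁻¹ := hconj
    set z : RAAG A Γ := x⁻¹ * f x with hzdef
    have hzc : ∀ a : A, z * raagGen Γ a = raagGen Γ a * z := by
      intro a
      have h1 : z * raagGen Γ a * z⁻¹ = raagGen Γ a := by
        have h2 : z * raagGen Γ a * z⁻¹
            = x⁻¹ * (f x * raagGen Γ a * (f x)⁻¹) * x := by
          rw [hzdef]; group
        rw [h2, hx a]
        group
      calc z * raagGen Γ a = (z * raagGen Γ a * z⁻¹) * z := by group
      _ = raagGen Γ a * z := by rw [h1]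
    have hcentral : ∀ w, z * w = w * z := RaagAux.central_of_comm hzc
    have hmem : ∀ s : Finset A,
        z ∈ RaagAux.gs Γ {v | ∀ a ∈ s, v ∈ RaagAux.Star.StS Γ a} := by
      intro s
      induction s using Finset.induction with
      | empty =>
        have : ({v | ∀ a ∈ (∅ : Finset A), v ∈ RaagAux.Star.StS Γ a} : Set A)
            = Set.univ := by
          ext v; simp
        rw [this]
        exact RaagAux.gs_univ z
      | insert _ _ ha ih =>
        rename_i a s
        obtain ⟨b₀, hb₀, hnadj⟩ := hcone a
        have h1 := RaagAux.Star.central_mem_star a b₀ hb₀ hnadj hcentral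
        have h2 := RaagAux.mem_gs_inter h1 ih
        have h3 : (RaagAux.Star.StS Γ a ∩ {v | ∀ c ∈ s, v ∈ RaagAux.Star.StS Γ c})
            = {v | ∀ c ∈ insert a s, v ∈ RaagAux.Star.StS Γ c} := by
          ext v
          simp only [Set.mem_inter_iff, Set.mem_setOf_eq, Finset.mem_insert]
          constructor
          · rintro ⟨hv, hall⟩ c (rfl | hcs)
            · exact hv
            · exact hall c hcs
          · intro hall
            exact ⟨hall a (Or.inl rfl), fun c hcs => hall c (Or.inr hcs)⟩
        rwa [h3] at h2
    have hz1 : z = 1 := by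
      have h4 := hmem Finset.univ
      have h5 : ({v | ∀ a ∈ (Finset.univ : Finset A), v ∈ RaagAux.Star.StS Γ a} : Set A)
          = ∅ := by
        ext v
        simp only [Set.mem_setOf_eq, Finset.mem_univ, forall_const,
          Set.mem_empty_iff_false, iff_false]
        intro hall
        obtain ⟨b, hbv, hnadjb⟩ := hcone v
        rcases hall b with h | h
        · exact hbv h.symm
        · exact hnadjb h.symm
      rw [h5] at h4
      exact RaagAux.gs_empty h4
    rw [hzdef] at hz1
    exact (inv_mul_eq_one.mp hz1).symm
  · intro hcone
    obtain ⟨a, ha⟩ := hcone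
    have hc : ∀ w, raagGen Γ a * w = w * raagGen Γ a :=
      RaagAux.central_of_comm (fun b => by
        rcases eq_or_ne b a with rfl | hba
        · rfl
        · exact RaagAux.raag_rel (ha b hba))
    have hcn : ∀ n : ℤ, ∀ w, raagGen Γ a ^ n * w = w * raagGen Γ a ^ n := by
      intro n w
      exact Commute.zpow_left (hc w) n
    refine Set.infinite_of_injective_forall_mem
      (f := fun n : ℤ => Equiv.mulRight (raagGen Γ a ^ n)) ?_ ?_
    · intro n m hnm
      have := congrArg (fun e => (e : RAAG A Γ ≃ RAAG A Γ) 1) hnm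
      simp only [Equiv.coe_mulRight, one_mul] at this
      exact RaagAux.gen_zpow_injective a this
    · intro n
      exact ⟨RaagAux.mulRight_isSyllIsom _ (hcn n), RaagAux.mulRight_inducesId _ (hcn n)⟩
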